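/- Let Θ(·;λ) be an odd monotone unbounded thresholding function and P(ξ;λ) = P(0;λ) + P_Θ(ξ;λ) + q(ξ;λ) where P_Θ(ξ;λ) = ∫₀^{|ξ|}(sup{t:Θ(t;λ)≤u} − u)du, q ≥ 0 and q(Θ(t;λ);λ)=0 for all t. Then for every t where Θ(·;λ) is continuous and every ξ, (t−ξ)²/2 + P(ξ;λ) ≥ (t−Θ(t;λ))²/2 + P(Θ(t;λ);λ). -/
import Mathlib

open MeasureTheory intervalIntegral

lemma core_10 (Θ : ℝ → ℝ) (hmono : Monotone Θ)
    (hubd : ¬ BddAbove (Set.range Θ))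
    (s : ℝ → ℝ)
    (hs : ∀ u, s u = sSup {x : ℝ | Θ x ≤ u} - u)
    (hint : ∀ a b : ℝ, IntervalIntegrable s MeasureTheory.volume a b)
    (t : ℝ) (ht : 0 ≤ t) (hθ : 0 ≤ Θ t) (ξ : ℝ) (hξ : 0 ≤ ξ) :
    (t - Θ t) ^ 2 / 2 + ∫ u in (0:ℝ)..Θ t, s u ≤
      (t - ξ) ^ 2 / 2 + ∫ u in (0:ℝ)..ξ, s u := by
  set θ := Θ t with hθdef
  have hbdd : ∀ u : ℝ, BddAbove {x : ℝ | Θ x ≤ u} := by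
    intro u
    obtain ⟨y, hy⟩ : ∃ y, u < Θ y := by
      by_contra h
      push_neg at h
      exact hubd ⟨u, by rintro _ ⟨x, rfl⟩; exact h x⟩
    refine ⟨y, fun x hx => ?_⟩
    by_contra hxy
    push_neg at hxy
    have := hmono hxy.le
    simp only [Set.mem_setOf_eq] at hx
    linarith
  have hcontf : Continuous (fun u : ℝ => t - u) := by continuity
  rcases le_or_gt θ ξ with hcase | hcase
  · -- ξ ≥ θ : s u ≥ t - u on [θ, ξ]
    have key : ∀ u ∈ Set.Icc θ ξ, t - u ≤ s u := by
      intro u hu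
      rw [hs]
      have htS : t ∈ {x : ℝ | Θ x ≤ u} := hu.1
      have := le_csSup (hbdd u) htS
      linarith
    have hmon := intervalIntegral.integral_mono_on hcase
      (hcontf.intervalIntegrable θ ξ) (hint θ ξ) key
    have hsplit : (∫ u in (0:ℝ)..θ, s u) + (∫ u in θ..ξ, s u) = ∫ u in (0:ℝ)..ξ, s u :=
      intervalIntegral.integral_add_adjacent_intervals (hint 0 θ) (hint θ ξ)
    have hval : (∫ u in θ..ξ, (t - u)) = t * (ξ - θ) - (ξ ^ 2 - θ ^ 2) / 2 := by
      rw [intervalIntegral.integral_sub intervalIntegrable_const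
        intervalIntegrable_id, intervalIntegral.integral_const, integral_id, smul_eq_mul]
      ring
    rw [hval] at hmon
    nlinarith [hmon, hsplit]
  · -- ξ < θ : s u ≤ t - u a.e. on [ξ, θ]
    have key : ∀ u ∈ Set.Icc ξ θ, u ≠ θ → s u ≤ t - u := by
      intro u hu hne
      have hu' : u < θ := lt_of_le_of_ne hu.2 hne
      rw [hs]
      have hsup : sSup {x : ℝ | Θ x ≤ u} ≤ t := by
        by_contra hlt
        push_neg at hlt
        rcases Set.eq_empty_or_nonempty {x : ℝ | Θ x ≤ u} with hS | hS
        · rw [hS, Real.sSup_empty] at hlt; linarith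
        · obtain ⟨x, hxS, hx⟩ := exists_lt_of_lt_csSup hS hlt
          have := hmono hx.le
          simp only [Set.mem_setOf_eq] at hxS
          linarith
      linarith
    have hae : s ≤ᵐ[volume.restrict (Set.Icc ξ θ)] fun u => t - u := by
      have h1 : ∀ᵐ u : ℝ ∂(volume.restrict (Set.Icc ξ θ)), u ≠ θ := by
        refine MeasureTheory.ae_restrict_of_ae ?_
        rw [MeasureTheory.ae_iff]
        have : {u : ℝ | ¬ u ≠ θ} = {θ} := by ext u; simp
        rw [this]
        exact Real.volume_singleton
      have h2 : ∀ᵐ u : ℝ ∂(volume.restrict (Set.Icc ξ θ)), u ∈ Set.Icc ξ θ :=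
        MeasureTheory.ae_restrict_mem measurableSet_Icc
      filter_upwards [h1, h2] with u hu1 hu2
      exact key u hu2 hu1
    have hmon := intervalIntegral.integral_mono_ae_restrict hcase.le
      (hint ξ θ) (hcontf.intervalIntegrable ξ θ) hae
    have hsplit : (∫ u in (0:ℝ)..ξ, s u) + (∫ u in ξ..θ, s u) = ∫ u in (0:ℝ)..θ, s u :=
      intervalIntegral.integral_add_adjacent_intervals (hint 0 ξ) (hint ξ θ)
    have hval : (∫ u in ξ..θ, (t - u)) = t * (θ - ξ) - (θ ^ 2 - ξ ^ 2) / 2 := by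
      rw [intervalIntegral.integral_sub intervalIntegrable_const
        intervalIntegrable_id, intervalIntegral.integral_const, integral_id, smul_eq_mul]
      ring
    rw [hval] at hmon
    nlinarith [hmon, hsplit]

theorem stmt_10 (Θ : ℝ → ℝ)
    (hodd : ∀ x, Θ (-x) = -Θ x)
    (hmono : Monotone Θ)
    (hubd : ¬ BddAbove (Set.range Θ))
    (hlbd : ¬ BddBelow (Set.range Θ))
    (s : ℝ → ℝ)
    (hs : ∀ u, s u = sSup {x : ℝ | Θ x ≤ u} - u)
    (hsnn : ∀ u, 0 ≤ s u)
    (hint : ∀ a b : ℝ, IntervalIntegrable s MeasureTheory.volume a b)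
    (P0 : ℝ) (q : ℝ → ℝ) (hq : ∀ x, 0 ≤ q x) (hqΘ : ∀ u, q (Θ u) = 0)
    (P : ℝ → ℝ)
    (hP : ∀ ξ, P ξ = P0 + (∫ u in (0:ℝ)..|ξ|, s u) + q ξ)
    (t : ℝ) (hcont : ContinuousAt Θ t) :
    ∀ ξ : ℝ,
      (t - ξ) ^ 2 / 2 + P ξ ≥ (t - Θ t) ^ 2 / 2 + P (Θ t) := by
  intro ξ
  have hΘ0 : Θ 0 = 0 := by
    have := hodd 0
    simp at this
    linarith [this]
  have hΘabs : Θ |t| = |Θ t| := by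
    rcases le_or_gt 0 t with h | h
    · rw [abs_of_nonneg h, abs_of_nonneg (hΘ0 ▸ hmono h)]
    · rw [abs_of_neg h, hodd, abs_of_nonpos (hΘ0 ▸ hmono h.le)]
  have hθnn : 0 ≤ Θ |t| := hΘ0 ▸ hmono (abs_nonneg t)
  have hcore := core_10 Θ hmono hubd s hs hint |t| (abs_nonneg t) hθnn |ξ| (abs_nonneg ξ)
  rw [hΘabs] at hcore
  have hsq1 : (|t| - |ξ|) ^ 2 ≤ (t - ξ) ^ 2 := by
    have h1 : |(|t| - |ξ|)| ≤ |t - ξ| := abs_abs_sub_abs_le_abs_sub t ξ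
    calc (|t| - |ξ|) ^ 2 = |(|t| - |ξ|)| ^ 2 := by rw [sq_abs]
      _ ≤ |t - ξ| ^ 2 := by nlinarith [abs_nonneg (|t| - |ξ|)]
      _ = (t - ξ) ^ 2 := sq_abs _
  have hsq2 : (|t| - |Θ t|) ^ 2 = (t - Θ t) ^ 2 := by
    rcases le_or_gt 0 t with h | h
    · rw [abs_of_nonneg h, abs_of_nonneg (hΘ0 ▸ hmono h)]
    · rw [abs_of_neg h, abs_of_nonpos (hΘ0 ▸ hmono h.le)]; ring
  rw [hP ξ, hP (Θ t), hqΘ t]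
  have hqξ := hq ξ
  rw [hsq2] at hcore
  linarith
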